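/- arXiv:1502.05105 — 7 statements merged into one kernel-verified Lean document; each statement's English description precedes it below -/
import Mathlib

section
/- For each positive integer n, every integer solution (x₁,...,x_{n+4}) of the system {xᵢ·xᵢ = x_{i+1} for i ∈ {1,...,n}, x_{n+2}+1 = x₁, x_{n+3}+1 = x_{n+2}, x_{n+3}·x_{n+4} = x_{n+1}} satisfies |xᵢ| ≤ (2+2^(2^n))^(2^n) for all i ∈ {1,...,n+4}. -/
theorem stmt_5 : ∀ n : ℕ, 0 < n → ∀ x : ℕ → ℤ,
    (∀ i, 1 ≤ i → i ≤ n → x i * x i = x (i + 1)) →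
    x (n + 2) + 1 = x 1 →
    x (n + 3) + 1 = x (n + 2) →
    x (n + 3) * x (n + 4) = x (n + 1) →
    ∀ i, 1 ≤ i → i ≤ n + 4 → |x i| ≤ (2 + 2 ^ (2 ^ n)) ^ (2 ^ n) := by
  intro n hn x hsq h2 h3 h4 i hi1 hi2
  set B : ℤ := 2 + 2 ^ (2 ^ n) with hB
  -- powers formula
  have hpow : ∀ k, k ≤ n → x (k + 1) = x 1 ^ 2 ^ k := by
    intro k
    induction k with
    | zero => intro _; simp
    | succ m ih =>
      intro hm
      have hm' : m ≤ n := Nat.le_of_succ_le hm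
      have := hsq (m + 1) (by omega) (by omega)
      rw [ih hm'] at this
      rw [← this]
      ring
  have hxn1 : x (n + 1) = x 1 ^ 2 ^ n := hpow n le_rfl
  have hx3 : x (n + 3) = x 1 - 2 := by omega
  -- divisibility
  have hdvd1 : x (n + 3) ∣ x 1 ^ 2 ^ n := ⟨x (n + 4), by rw [← hxn1, h4]⟩
  have hdvd2 : x (n + 3) ∣ x 1 ^ 2 ^ n - 2 ^ 2 ^ n := by
    rw [hx3]; exact sub_dvd_pow_sub_pow (x 1) 2 (2 ^ n)
  have hdvd : x (n + 3) ∣ 2 ^ 2 ^ n := (dvd_sub_right hdvd1).mp hdvd2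
  have hne : x (n + 3) ≠ 0 := by
    intro h0
    have : x (n + 1) = 0 := by rw [← h4, h0]; ring
    rw [hxn1, hx3] at *
    have hx1 : x 1 = 2 := by omega
    rw [hx1] at this
    have : (0:ℤ) < 2 ^ 2 ^ n := by positivity
    omega
  have hpos : (0:ℤ) < 2 ^ 2 ^ n := by positivity
  have habs3 : |x (n + 3)| ≤ 2 ^ 2 ^ n :=
    Int.le_of_dvd hpos ((abs_dvd _ _).mpr hdvd)
  have habs1 : |x 1| ≤ B := by
    rw [hx3] at habs3
    have := abs_sub_abs_le_abs_sub (x 1) 2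
    simp only [abs_two] at this
    omega
  have hBge : (4:ℤ) ≤ B := by
    have : (2:ℤ) ≤ 2 ^ 2 ^ n := by
      calc (2:ℤ) = 2 ^ 1 := by ring
      _ ≤ 2 ^ 2 ^ n := pow_le_pow_right₀ (by norm_num) (Nat.one_le_two_pow)
    omega
  have hB0 : (0:ℤ) ≤ B := by omega
  -- bound B ≤ B ^ 2 ^ n and B + 1 ≤ B ^ 2 ^ n
  have hBB : B + 1 ≤ B ^ 2 ^ n := by
    calc B + 1 ≤ B * B := by nlinarith
    _ = B ^ 2 := by ring
    _ ≤ B ^ 2 ^ n := pow_le_pow_right₀ (by omega) (by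
        calc 2 = 2 ^ 1 := rfl
        _ ≤ 2 ^ n := Nat.pow_le_pow_right (by norm_num) hn)
  -- case analysis on i
  rcases Nat.lt_or_ge i (n + 2) with hlt | hge
  · -- i ≤ n + 1 : x i = x 1 ^ 2 ^ (i - 1)
    obtain ⟨k, rfl⟩ : ∃ k, i = k + 1 := ⟨i - 1, by omega⟩
    have hk : k ≤ n := by omega
    rw [hpow k hk, abs_pow]
    calc |x 1| ^ 2 ^ k ≤ B ^ 2 ^ k := pow_le_pow_left₀ (abs_nonneg _) habs1 _
    _ ≤ B ^ 2 ^ n := pow_le_pow_right₀ (by omega) (Nat.pow_le_pow_right (by norm_num) hk)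
  · have hcases : i = n + 2 ∨ i = n + 3 ∨ i = n + 4 := by omega
    rcases hcases with rfl | rfl | rfl
    · -- n + 2 : x 1 - 1
      have : x (n + 2) = x 1 - 1 := by omega
      rw [this]
      have := abs_sub_abs_le_abs_sub (x 1) 1
      simp only [abs_one] at this
      have h1 : |x 1 - 1| ≤ |x 1| + 1 := by
        have := abs_sub (x 1) 1
        simp only [abs_one] at this
        exact abs_sub_le_iff.mpr ⟨by cases abs_cases (x 1) <;> omega, by
          cases abs_cases (x 1) <;> omega⟩
      omega
    · -- n + 3
      rw [hx3]
      rw [hx3] at habs3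
      calc |x 1 - 2| ≤ 2 ^ 2 ^ n := habs3
      _ ≤ B ^ 2 ^ n := pow_le_pow_left₀ (by norm_num) (by omega) _
    · -- n + 4
      have h1 : (1:ℤ) ≤ |x (n + 3)| := by
        rcases abs_pos.mpr hne with h; omega
      have : |x (n + 3)| * |x (n + 4)| = |x (n + 1)| := by
        rw [← abs_mul, h4]
      have hbound : |x (n + 1)| ≤ B ^ 2 ^ n := by
        rw [hxn1, abs_pow]
        exact pow_le_pow_left₀ (abs_nonneg _) habs1 _
      nlinarith [abs_nonneg (x (n + 4))]
end

section
/- For each positive integer n, the system {xᵢ·xᵢ = x_{i+1} for i ∈ {1,...,n}, x_{n+2}+1 = x₁, x_{n+3}+1 = x_{n+2}, x_{n+3}·x_{n+4} = x_{n+1}} has only finitely many integer solutions. -/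
set_option maxHeartbeats 1000000

theorem stmt_6 : ∀ n : ℕ, 0 < n →
    Set.Finite {x : Fin (n + 4) → ℤ |
      (∀ i : ℕ, ∀ h : i < n,
        x ⟨i, by omega⟩ * x ⟨i, by omega⟩ = x ⟨i + 1, by omega⟩) ∧
      x ⟨n + 1, by omega⟩ + 1 = x ⟨0, by omega⟩ ∧
      x ⟨n + 2, by omega⟩ + 1 = x ⟨n + 1, by omega⟩ ∧
      x ⟨n + 2, by omega⟩ * x ⟨n + 3, by omega⟩ = x ⟨n, by omega⟩} := by
  intro n hn
  set S := {x : Fin (n + 4) → ℤ |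
      (∀ i : ℕ, ∀ h : i < n,
        x ⟨i, by omega⟩ * x ⟨i, by omega⟩ = x ⟨i + 1, by omega⟩) ∧
      x ⟨n + 1, by omega⟩ + 1 = x ⟨0, by omega⟩ ∧
      x ⟨n + 2, by omega⟩ + 1 = x ⟨n + 1, by omega⟩ ∧
      x ⟨n + 2, by omega⟩ * x ⟨n + 3, by omega⟩ = x ⟨n, by omega⟩} with hS
  -- key: powers
  have hpow : ∀ x ∈ S, ∀ i : ℕ, ∀ h : i ≤ n,
      x ⟨i, by omega⟩ = x ⟨0, by omega⟩ ^ (2 ^ i) := by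
    rintro x ⟨h1, -, -, -⟩ i
    induction i with
    | zero => intro _; simp
    | succ k ih =>
      intro h
      have hk := h1 k (by omega)
      rw [← hk, ih (by omega)]
      ring
  -- facts
  have hfacts : ∀ x ∈ S,
      (x ⟨0, by omega⟩ - 2) * x ⟨n + 3, by omega⟩ = x ⟨0, by omega⟩ ^ (2 ^ n)
      ∧ x ⟨0, by omega⟩ ≠ 2 ∧ (x ⟨0, by omega⟩ - 2) ∣ 2 ^ (2 ^ n) := by
    intro x hx
    obtain ⟨h1, h2, h3, h4⟩ := hx
    have hn2 : x ⟨n + 2, by omega⟩ = x ⟨0, by omega⟩ - 2 := by omega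
    have hxn : x ⟨n, by omega⟩ = x ⟨0, by omega⟩ ^ (2 ^ n) := hpow x ⟨h1, h2, h3, h4⟩ n le_rfl
    have heq : (x ⟨0, by omega⟩ - 2) * x ⟨n + 3, by omega⟩ = x ⟨0, by omega⟩ ^ (2 ^ n) := by
      rw [← hn2, h4, hxn]
    refine ⟨heq, ?_, ?_⟩
    · intro h0
      rw [h0] at heq
      simp at heq
      have : (0:ℤ) < 2 ^ (2^n) := by positivity
      omega
    · have hdvd1 : (x ⟨0, by omega⟩ - 2) ∣ x ⟨0, by omega⟩ ^ (2 ^ n) := ⟨_, heq.symm⟩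
      have hdvd2 : (x ⟨0, by omega⟩ - 2) ∣ x ⟨0, by omega⟩ ^ (2 ^ n) - 2 ^ (2 ^ n) :=
        sub_dvd_pow_sub_pow _ _ _
      have := dvd_sub hdvd1 hdvd2
      simpa using this
  -- finiteness via image
  have h04 : 0 < n + 4 := by omega
  apply Set.Finite.of_finite_image (f := fun x => x ⟨0, h04⟩)
  · apply Set.Finite.subset (Set.finite_Icc (2 - 2 ^ (2^n) : ℤ) (2 + 2 ^ (2^n)))
    rintro a ⟨x, hx, rfl⟩
    obtain ⟨heq, hne, hdvd⟩ := hfacts x hx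
    have h0 : x ⟨0, by omega⟩ - 2 ≠ 0 := by
      intro h; exact hne (by omega)
    have hpos : (0:ℤ) < 2 ^ (2^n) := by positivity
    have hub : x ⟨0, by omega⟩ - 2 ≤ 2 ^ (2^n) := Int.le_of_dvd hpos hdvd
    have hlb : -(x ⟨0, by omega⟩ - 2) ≤ 2 ^ (2^n) :=
      Int.le_of_dvd hpos (neg_dvd.mpr hdvd)
    simp only [Set.mem_Icc]
    omega
  · intro x hx y hy hxy
    obtain ⟨heqx, hnex, -⟩ := hfacts x hx
    obtain ⟨heqy, hney, -⟩ := hfacts y hy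
    have hpx := fun i h => hpow x hx i h
    have hpy := fun i h => hpow y hy i h
    obtain ⟨hx1, hx2, hx3, hx4⟩ := hx
    obtain ⟨hy1, hy2, hy3, hy4⟩ := hy
    replace hxy : x ⟨0, h04⟩ = y ⟨0, h04⟩ := hxy
    clear hfacts hpow hS
    clear_value S
    clear S
    funext i
    obtain ⟨i, hi⟩ := i
    rcases lt_or_ge i (n + 1) with h | h
    · have e1 := hpx i (by omega)
      have e2 := hpy i (by omega)
      show x ⟨i, hi⟩ = y ⟨i, hi⟩
      rw [e1, e2, hxy]
    · rcases (by omega : i = n + 1 ∨ i = n + 2 ∨ i = n + 3) with rfl | rfl | rfl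
      · show x ⟨n + 1, hi⟩ = y ⟨n + 1, hi⟩
        omega
      · show x ⟨n + 2, hi⟩ = y ⟨n + 2, hi⟩
        omega
      · show x ⟨n + 3, hi⟩ = y ⟨n + 3, hi⟩
        have h0 : x ⟨0, by omega⟩ - 2 ≠ 0 := fun h => hnex (by omega)
        apply mul_left_cancel₀ h0
        rw [heqx, hxy, heqy]
end

section
/- For each positive integer n, the tuple given by xᵢ = (2+2^(2^n))^(2^(i-1)) for i ∈ {1,...,n+1}, x_{n+2} = 1+2^(2^n), x_{n+3} = 2^(2^n), and x_{n+4} = (1+2^(2^n - 1))^(2^n) is a solution in positive integers of the system {xᵢ·xᵢ = x_{i+1} for i ∈ {1,...,n}, x_{n+2}+1 = x₁, x_{n+3}+1 = x_{n+2}, x_{n+3}·x_{n+4} = x_{n+1}}. -/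
theorem stmt_7 : ∀ n : ℕ, 0 < n → ∀ x : ℕ → ℕ,
    (∀ i, 1 ≤ i → i ≤ n + 1 → x i = (2 + 2 ^ (2 ^ n)) ^ (2 ^ (i - 1))) →
    x (n + 2) = 1 + 2 ^ (2 ^ n) →
    x (n + 3) = 2 ^ (2 ^ n) →
    x (n + 4) = (1 + 2 ^ (2 ^ n - 1)) ^ (2 ^ n) →
    (∀ i, 1 ≤ i → i ≤ n + 4 → 0 < x i) ∧
    (∀ i, 1 ≤ i → i ≤ n → x i * x i = x (i + 1)) ∧
    x (n + 2) + 1 = x 1 ∧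
    x (n + 3) + 1 = x (n + 2) ∧
    x (n + 3) * x (n + 4) = x (n + 1) := by
  intro n hn x h1 h2 h3 h4
  refine ⟨?_, ?_, ?_, ?_, ?_⟩
  · intro i hi hi4
    rcases lt_or_ge i (n + 2) with h | h
    · rw [h1 i hi (by omega)]; positivity
    · have : i = n + 2 ∨ i = n + 3 ∨ i = n + 4 := by omega
      rcases this with rfl | rfl | rfl
      · rw [h2]; positivity
      · rw [h3]; positivity
      · rw [h4]; positivity
  · intro i hi hin
    rw [h1 i hi (by omega), h1 (i + 1) (by omega) (by omega)]
    rw [← pow_add]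
    congr 1
    rw [show i + 1 - 1 = i - 1 + 1 from by omega, pow_succ]
    omega
  · rw [h2, h1 1 le_rfl (by omega)]
    ring
  · rw [h2, h3]; ring
  · rw [h3, h4, h1 (n + 1) (by omega) (by omega)]
    have h : (2 : ℕ) ^ (2 ^ n) = 2 ^ (2 ^ n - 1) * 2 := by
      rw [← pow_succ]; congr 1; have := Nat.one_le_two_pow (n := n); omega
    rw [show n + 1 - 1 = n from rfl, ← mul_pow]
    congr 1
    rw [h]; ring
end

section
/- For each positive integer n, every integer solution of the system {xᵢ·xᵢ = x_{i+1} for i ∈ {1,...,n}, x_{n+2}+1 = x₁, x_{n+3}+1 = x_{n+2}, x_{n+3}·x_{n+4} = x_{n+1}} satisfies x₁ ∈ [2 - 2^(2^n), 2 + 2^(2^n)] and x₁ - 2 divides 2^(2^n). -/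
theorem stmt_8 : ∀ n : ℕ, 0 < n → ∀ x : ℕ → ℤ,
    (∀ i, 1 ≤ i → i ≤ n → x i * x i = x (i + 1)) →
    x (n + 2) + 1 = x 1 →
    x (n + 3) + 1 = x (n + 2) →
    x (n + 3) * x (n + 4) = x (n + 1) →
    (2 - 2 ^ (2 ^ n) ≤ x 1 ∧ x 1 ≤ 2 + 2 ^ (2 ^ n)) ∧
    (x 1 - 2) ∣ 2 ^ (2 ^ n) := by
  intro n hn x h1 h2 h3 h4
  have key : ∀ k, k ≤ n → x (k + 1) = x 1 ^ (2 ^ k) := by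
    intro k
    induction k with
    | zero => intro _; simp
    | succ m ih =>
      intro hm
      have hm' : m ≤ n := Nat.le_of_succ_le hm
      have := h1 (m + 1) (by omega) (by omega)
      rw [ih hm'] at this
      rw [← this, ← pow_add]
      ring_nf
  have hxn1 : x (n + 1) = x 1 ^ (2 ^ n) := key n le_rfl
  have hx3 : x (n + 3) = x 1 - 2 := by linarith
  have hdvd1 : (x 1 - 2) ∣ x 1 ^ (2 ^ n) := by
    rw [← hxn1, ← h4, hx3]; exact Dvd.intro _ rfl
  have hdvd2 : (x 1 - 2) ∣ x 1 ^ (2 ^ n) - 2 ^ (2 ^ n) :=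
    sub_dvd_pow_sub_pow (x 1) 2 (2 ^ n)
  have hdvd : (x 1 - 2) ∣ 2 ^ (2 ^ n) := by
    have := dvd_sub hdvd1 hdvd2
    simpa using this
  have habs : |x 1 - 2| ≤ 2 ^ (2 ^ n) := by
    have := Int.le_of_dvd (by positivity) ((abs_dvd _ _).mpr hdvd)
    simpa using this
  rw [abs_le] at habs
  exact ⟨⟨by linarith [habs.1], by linarith [habs.2]⟩, hdvd⟩
end

section
/- For each positive integer n, every positive integer solution of the system {xᵢ·xᵢ = x_{i+1} for i ∈ {1,...,n}, x_{n+2}+1 = x₁, x_{n+3}+1 = x_{n+2}, x_{n+3}·x_{n+4} = x_{n+1}} satisfies x₁ ≤ 2 + 2^(2^n), and the maximal such value x₁ = 2 + 2^(2^n) is attained by some positive integer solution. -/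
theorem stmt_9 : ∀ n : ℕ, 0 < n →
    (∀ x : ℕ → ℕ,
      (∀ i, 1 ≤ i → i ≤ n + 4 → 0 < x i) →
      (∀ i, 1 ≤ i → i ≤ n → x i * x i = x (i + 1)) →
      x (n + 2) + 1 = x 1 →
      x (n + 3) + 1 = x (n + 2) →
      x (n + 3) * x (n + 4) = x (n + 1) →
      x 1 ≤ 2 + 2 ^ (2 ^ n)) ∧
    (∃ x : ℕ → ℕ,
      (∀ i, 1 ≤ i → i ≤ n + 4 → 0 < x i) ∧
      (∀ i, 1 ≤ i → i ≤ n → x i * x i = x (i + 1)) ∧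
      x (n + 2) + 1 = x 1 ∧
      x (n + 3) + 1 = x (n + 2) ∧
      x (n + 3) * x (n + 4) = x (n + 1) ∧
      x 1 = 2 + 2 ^ (2 ^ n)) := by
  intro n hn
  constructor
  · intro x hpos hsq h2 h3 h4
    have key : ∀ i, i ≤ n → x (i + 1) = x 1 ^ 2 ^ i := by
      intro i
      induction i with
      | zero => intro _; simp
      | succ j ih =>
        intro hj
        have hj' : j ≤ n := by omega
        have := hsq (j + 1) (by omega) hj
        rw [ih hj'] at this
        rw [← this, pow_succ, pow_mul]
        ring
    have hxn1 : x (n + 1) = x 1 ^ 2 ^ n := key n le_rfl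
    set a := x (n + 3) with ha
    have hapos : 0 < a := hpos (n + 3) (by omega) (by omega)
    have hx1 : x 1 = a + 2 := by omega
    have hdvd : a ∣ (a + 2) ^ 2 ^ n := ⟨x (n + 4), by rw [← hx1, ← hxn1, ← h4]⟩
    have hmod : (a + 2) ^ 2 ^ n % a = 2 ^ 2 ^ n % a := by
      rw [Nat.pow_mod, Nat.add_mod_left, ← Nat.pow_mod]
    have hdvd2 : a ∣ 2 ^ 2 ^ n := by
      have h0 : (a + 2) ^ 2 ^ n % a = 0 := (Nat.dvd_iff_mod_eq_zero ..).mp hdvd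
      exact Nat.dvd_of_mod_eq_zero (hmod ▸ h0)
    have := Nat.le_of_dvd (by positivity) hdvd2
    omega
  · set M := 2 ^ 2 ^ n with hM
    have hn1 : 1 ≤ 2 ^ n := Nat.one_le_two_pow
    refine ⟨fun i => if i ≤ n + 1 then (M + 2) ^ 2 ^ (i - 1)
      else if i = n + 2 then M + 1
      else if i = n + 3 then M
      else (1 + 2 ^ (2 ^ n - 1)) ^ 2 ^ n, ?_, ?_, ?_, ?_, ?_, ?_⟩
    · intro i _ _
      dsimp only
      split <;> [positivity; skip]
      split <;> [positivity; skip]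
      split <;> positivity
    · intro i hi hin
      have h1 : i ≤ n + 1 := by omega
      have h2 : i + 1 ≤ n + 1 := by omega
      have h3 : i + 1 - 1 = i := by omega
      have h4 : i - 1 + 1 = i := by omega
      simp only [h1, h2, h3, if_pos]
      rw [← pow_add]
      congr 1
      calc 2 ^ (i - 1) + 2 ^ (i - 1) = 2 ^ (i - 1) * 2 := by ring
        _ = 2 ^ (i - 1 + 1) := (pow_succ 2 (i - 1)).symm
        _ = 2 ^ i := by rw [h4]
    · have h1 : ¬ (n + 2 ≤ n + 1) := by omega
      have h2 : (1 : ℕ) ≤ n + 1 := by omega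
      simp [h1, h2]
    · have h1 : ¬ (n + 2 ≤ n + 1) := by omega
      have h2 : ¬ (n + 3 ≤ n + 1) := by omega
      have h3 : ¬ (n + 3 = n + 2) := by omega
      simp [h1, h2, h3]
    · have h2 : ¬ (n + 3 ≤ n + 1) := by omega
      have h3 : ¬ (n + 3 = n + 2) := by omega
      have h4 : ¬ (n + 4 ≤ n + 1) := by omega
      have h5 : ¬ (n + 4 = n + 2) := by omega
      have h6 : ¬ (n + 4 = n + 3) := by omega
      simp only [h2, h3, h4, h5, h6, if_false, le_refl, if_true, Nat.add_sub_cancel,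
        ite_false, ite_true]
      rw [hM, ← mul_pow]
      congr 1
      have he : 2 * 2 ^ (2 ^ n - 1) = 2 ^ 2 ^ n := by
        rw [← pow_succ']
        congr 1
        omega
      rw [mul_add, mul_one, he]
      ring
    · have h1 : (1 : ℕ) ≤ n + 1 := by omega
      simp [h1]
      ring
end

section
/- For all positive integers x, y, z: x + y = z if and only if S(z·x)·S(z·y) = S((z·z)·S(x·y)), where S denotes the successor function S(n) = n + 1. -/
theorem stmt_10 : ∀ x y z : ℕ, 0 < x → 0 < y → 0 < z →
    (x + y = z ↔ (z * x + 1) * (z * y + 1) = (z * z) * (x * y + 1) + 1) := by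
  intro x y z hx hy hz
  constructor
  · intro h; subst h; ring
  · intro h
    have : z * (x + y) = z * z := by nlinarith
    exact Nat.eq_of_mul_eq_mul_left hz this
end

section
/- For each integer k ≥ 3, the system {xᵢ·xᵢ = x_{i+1} for i ∈ {1,...,k}, x_{k+2}+x_{k+2} = x_{k+3}, x_{k+2}·x_{k+2} = x_{k+3}, x_{k+4}+x_{k+3} = x₁, x_{k+4}·x_{k+5} = x_{k+1}} has a positive integer solution in n = k+5 variables with some coordinate exceeding 2^(2^(n-1)). -/
theorem stmt_14 : ∀ k : ℕ, 3 ≤ k →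
    ∃ x : ℕ → ℕ,
      (∀ i, 1 ≤ i → i ≤ k + 5 → 0 < x i) ∧
      (∀ i, 1 ≤ i → i ≤ k → x i * x i = x (i + 1)) ∧
      x (k + 2) + x (k + 2) = x (k + 3) ∧
      x (k + 2) * x (k + 2) = x (k + 3) ∧
      x (k + 4) + x (k + 3) = x 1 ∧
      x (k + 4) * x (k + 5) = x (k + 1) ∧
      ∃ i, 1 ≤ i ∧ i ≤ k + 5 ∧ 2 ^ (2 ^ (k + 5 - 1)) < x i := by
  intro k hk
  have h16 : 16 ≤ 2 ^ (k + 1) := by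
    calc (16:ℕ) = 2 ^ 4 := by norm_num
    _ ≤ 2 ^ (k + 1) := Nat.pow_le_pow_right (by norm_num) (by omega)
  refine ⟨fun i => if i ≤ k + 1 then 65540 ^ (2 ^ (i - 1))
      else if i = k + 2 then 2 else if i = k + 3 then 4
      else if i = k + 4 then 65536
      else 2 ^ (2 ^ (k + 1) - 16) * 16385 ^ (2 ^ k), ?_, ?_, ?_, ?_, ?_, ?_, ?_⟩
  · intro i h1 h2
    simp only []
    split_ifs <;> positivity
  · intro i h1 h2
    have hi : i ≤ k + 1 := by omega
    have hi' : i + 1 ≤ k + 1 := by omega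
    simp only [if_pos hi, if_pos hi']
    rw [← pow_add]
    congr 1
    have : i - 1 + 1 = i := by omega
    rw [show i + 1 - 1 = (i-1) + 1 by omega, pow_succ]
    ring
  · simp only [if_neg (by omega : ¬ k + 2 ≤ k + 1), if_pos rfl,
      if_neg (by omega : ¬ k + 3 ≤ k + 1), if_neg (by omega : k + 3 ≠ k + 2), if_true]
  · simp only [if_neg (by omega : ¬ k + 2 ≤ k + 1), if_pos rfl,
      if_neg (by omega : ¬ k + 3 ≤ k + 1), if_neg (by omega : k + 3 ≠ k + 2), if_true]
  · simp only [if_neg (by omega : ¬ k + 4 ≤ k + 1), if_neg (by omega : k + 4 ≠ k + 2),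
      if_neg (by omega : k + 4 ≠ k + 3), if_pos rfl, if_pos (by omega : 1 ≤ k + 1), if_true]
    norm_num
  · simp only [if_neg (by omega : ¬ k + 4 ≤ k + 1), if_neg (by omega : k + 4 ≠ k + 2),
      if_neg (by omega : k + 4 ≠ k + 3), if_pos rfl,
      if_neg (by omega : ¬ k + 5 ≤ k + 1), if_neg (by omega : k + 5 ≠ k + 2),
      if_neg (by omega : k + 5 ≠ k + 3), if_neg (by omega : k + 5 ≠ k + 4),
      if_pos (le_refl (k+1)), if_true]
    rw [show (65536:ℕ) = 2 ^ 16 by norm_num, ← mul_assoc, ← pow_add,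
      show 16 + (2 ^ (k + 1) - 16) = 2 ^ (k + 1) by omega,
      show k + 1 - 1 = k from rfl,
      show 2 ^ (k + 1) = 2 * 2 ^ k by rw [pow_succ]; ring,
      pow_mul, show ((2:ℕ)^2 : ℕ) = 4 by norm_num, ← mul_pow]
    norm_num
  · refine ⟨k + 1, by omega, by omega, ?_⟩
    simp only [if_pos (le_refl (k+1)), show k + 1 - 1 = k from rfl]
    rw [show k + 5 - 1 = k + 4 by omega,
      show 2 ^ (k + 4) = 16 * 2 ^ k by rw [pow_add]; ring, pow_mul,
      show ((2:ℕ)^16 : ℕ) = 65536 by norm_num]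
    exact Nat.pow_lt_pow_left (by norm_num) (by positivity : (0:ℕ) < 2 ^ k).ne'
end
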